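/- For any d ≥ 1 and η ∈ ℝ, the softmax function with temperature η, f : ℝ^d → ℝ^d defined by f(x)_i = exp(η x_i)/Σ_{l=1}^d exp(η x_l), is η-Lipschitz with respect to the Euclidean norm (i.e. ‖f(x) − f(y)‖₂ ≤ |η|·‖x − y‖₂ for all x, y ∈ ℝ^d). -/

import Mathlib

open Real Finset

private lemma sm_key (d : ℕ) (p v : Fin d → ℝ) (hp : ∀ i, 0 ≤ p i)
    (hp1 : ∑ i, p i = 1) :
    ∑ i, (p i * (v i - ∑ j, p j * v j)) ^ 2 ≤ ∑ i, (v i) ^ 2 := by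
  set m := ∑ j, p j * v j with hm
  have hple : ∀ i, p i ≤ 1 := fun i =>
    hp1 ▸ Finset.single_le_sum (fun j _ => hp j) (Finset.mem_univ i)
  have h1 : ∑ i, (p i * (v i - m)) ^ 2 ≤ ∑ i, p i * (v i - m) ^ 2 := by
    apply Finset.sum_le_sum; intro i _
    rw [mul_pow]
    exact mul_le_mul_of_nonneg_right (by nlinarith [hp i, hple i]) (sq_nonneg _)
  have h2 : ∑ i, p i * (v i - m) ^ 2 = (∑ i, p i * (v i) ^ 2) - m ^ 2 := by
    have he : ∀ i ∈ Finset.univ, p i * (v i - m) ^ 2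
        = p i * (v i) ^ 2 - 2 * m * (p i * v i) + m ^ 2 * p i := by
      intro i _; ring
    rw [Finset.sum_congr rfl he, Finset.sum_add_distrib, Finset.sum_sub_distrib,
      ← Finset.mul_sum, ← Finset.mul_sum, hp1, ← hm]
    ring
  have h3 : ∑ i, p i * (v i) ^ 2 ≤ ∑ i, (v i) ^ 2 := by
    apply Finset.sum_le_sum; intro i _
    nlinarith [hp i, hple i, sq_nonneg (v i)]
  nlinarith [sq_nonneg m]

private lemma sm_alg (a s M vi η : ℝ) (hs : s ≠ 0) :
    η * (a / s) * (vi - M / s) = a * (-(s ^ 2)⁻¹ * (η * M)) + s⁻¹ * (η * a * vi) := by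
  field_simp
  ring

/-- the softmax function with temperature `η` on `ℝ^d` is `η`-Lipschitz
with respect to the Euclidean norm. -/
theorem stmt_4 (d : ℕ) (hd : 1 ≤ d) (η : ℝ)
    (f : EuclideanSpace ℝ (Fin d) → EuclideanSpace ℝ (Fin d))
    (hf : ∀ (x : EuclideanSpace ℝ (Fin d)) (i : Fin d),
      f x i = Real.exp (η * x i) / ∑ l : Fin d, Real.exp (η * x l)) :
    ∀ x y : EuclideanSpace ℝ (Fin d), ‖f x - f y‖ ≤ |η| * ‖x - y‖ := by
  classical
  have hproj : ∀ (j : Fin d) (w : EuclideanSpace ℝ (Fin d)),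
      EuclideanSpace.proj (𝕜 := ℝ) j w = w j := fun j w => PiLp.proj_apply 2 (fun _ : Fin d => ℝ) j w
  set S : EuclideanSpace ℝ (Fin d) → ℝ := fun x => ∑ l : Fin d, Real.exp (η * x l) with hSdef
  set p : EuclideanSpace ℝ (Fin d) → Fin d → ℝ := fun x i => Real.exp (η * x i) / S x with hpdef
  have hS0 : ∀ x : EuclideanSpace ℝ (Fin d), 0 < S x := by
    intro x
    apply Finset.sum_pos (fun l _ => Real.exp_pos _)
    exact Finset.univ_nonempty_iff.2 ⟨⟨0, hd⟩⟩
  have hpnn : ∀ x i, 0 ≤ p x i := fun x i =>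
    div_nonneg (Real.exp_pos _).le (hS0 x).le
  have hpsum : ∀ x : EuclideanSpace ℝ (Fin d), ∑ i, p x i = 1 := by
    intro x
    simp only [hpdef]
    rw [← Finset.sum_div, div_self (hS0 x).ne']
  -- the candidate derivative
  set D : EuclideanSpace ℝ (Fin d) → Fin d → (EuclideanSpace ℝ (Fin d) →L[ℝ] ℝ) := fun x i =>
    (η * p x i) • (EuclideanSpace.proj i -
      ∑ j : Fin d, p x j • EuclideanSpace.proj (𝕜 := ℝ) j) with hDdef
  set J : EuclideanSpace ℝ (Fin d) → (EuclideanSpace ℝ (Fin d) →L[ℝ] EuclideanSpace ℝ (Fin d)) := fun x =>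
    ((EuclideanSpace.equiv (Fin d) ℝ).symm : (Fin d → ℝ) →L[ℝ] EuclideanSpace ℝ (Fin d)).comp
      (ContinuousLinearMap.pi (D x)) with hJdef
  have hJapply : ∀ (x : EuclideanSpace ℝ (Fin d)) (v : EuclideanSpace ℝ (Fin d)) (i : Fin d),
      J x v i = η * p x i * (v i - ∑ j, p x j * v j) := by
    intro x v i
    have h0 : J x v i = D x i v := rfl
    rw [h0]
    simp only [hDdef, ContinuousLinearMap.smul_apply, ContinuousLinearMap.sub_apply,
      ContinuousLinearMap.sum_apply, ContinuousLinearMap.smul_apply,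
      hproj, smul_eq_mul]
  -- derivative of coordinate exponentials
  have hE : ∀ (x : EuclideanSpace ℝ (Fin d)) (i : Fin d),
      HasFDerivAt (fun y : EuclideanSpace ℝ (Fin d) => Real.exp (η * y i))
        ((η * Real.exp (η * x i)) • (EuclideanSpace.proj (𝕜 := ℝ) i)) x := by
    intro x i
    have h1 : HasFDerivAt (fun y : EuclideanSpace ℝ (Fin d) => η * y i)
        (η • (EuclideanSpace.proj (𝕜 := ℝ) i)) x :=
      (EuclideanSpace.proj (𝕜 := ℝ) i).hasFDerivAt.const_mul η
    have h2 := (Real.hasDerivAt_exp (η * x i)).comp_hasFDerivAt x h1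
    convert h2 using 1
    all_goals try rfl
    rw [smul_smul, mul_comm]
  have hS' : ∀ x : EuclideanSpace ℝ (Fin d), HasFDerivAt S
      (∑ l : Fin d, (η * Real.exp (η * x l)) • (EuclideanSpace.proj (𝕜 := ℝ) l)) x := by
    intro x
    exact HasFDerivAt.fun_sum (fun l _ => hE x l)
  -- derivative of each coordinate of f
  have hfi : ∀ (x : EuclideanSpace ℝ (Fin d)) (i : Fin d), HasFDerivAt (fun y : EuclideanSpace ℝ (Fin d) => f y i) (D x i) x := by
    intro x i
    have hfun : (fun y : EuclideanSpace ℝ (Fin d) => f y i) = fun y : EuclideanSpace ℝ (Fin d) => Real.exp (η * y i) * (S y)⁻¹ := by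
      funext y; rw [hf y i, div_eq_mul_inv]
    rw [hfun]
    have hinv : HasFDerivAt (fun y : EuclideanSpace ℝ (Fin d) => (S y)⁻¹)
        ((-(S x ^ 2)⁻¹) • (∑ l : Fin d, (η * Real.exp (η * x l)) •
          (EuclideanSpace.proj (𝕜 := ℝ) l))) x :=
      (hasDerivAt_inv (hS0 x).ne').comp_hasFDerivAt x (hS' x)
    have h := (hE x i).mul hinv
    convert h using 1
    all_goals try rfl
    refine ContinuousLinearMap.ext fun v => ?_
    simp only [hDdef, ContinuousLinearMap.smul_apply, ContinuousLinearMap.sub_apply,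
      ContinuousLinearMap.add_apply, ContinuousLinearMap.sum_apply,
      hproj, smul_eq_mul]
    have hsum1 : ∑ j : Fin d, p x j * v j = (∑ j : Fin d, Real.exp (η * x j) * v j) / S x := by
      rw [Finset.sum_div]
      refine Finset.sum_congr rfl fun j _ => ?_
      rw [hpdef]; ring
    have hsum2 : ∑ l : Fin d, (η * Real.exp (η * x l)) * v l
        = η * ∑ l : Fin d, Real.exp (η * x l) * v l := by
      rw [Finset.mul_sum]; refine Finset.sum_congr rfl fun l _ => by ring
    rw [hsum1, hsum2]
    simp only [hpdef]
    exact sm_alg (Real.exp (η * x i)) (S x) (∑ j : Fin d, Real.exp (η * x j) * v j)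
      (v i) η (hS0 x).ne'
  -- f has derivative J x at every x
  have hJ : ∀ x : EuclideanSpace ℝ (Fin d), HasFDerivAt f (J x) x := by
    intro x
    have hpi : HasFDerivAt (fun y : EuclideanSpace ℝ (Fin d) => (fun i => f y i : Fin d → ℝ))
        (ContinuousLinearMap.pi (D x)) x := by
      apply hasFDerivAt_pi''
      intro i
      have : (ContinuousLinearMap.proj (R := ℝ) (φ := fun _ : Fin d => ℝ) i).comp
          (ContinuousLinearMap.pi (D x)) = D x i := ContinuousLinearMap.proj_pi _ _
      rw [this]
      exact hfi x i
    have := ((EuclideanSpace.equiv (Fin d) ℝ).symm.comp_hasFDerivAt_iff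
      (f := fun y : EuclideanSpace ℝ (Fin d) => (fun i => f y i : Fin d → ℝ)) (x := x)
      (f' := ContinuousLinearMap.pi (D x))).2 hpi
    exact this
  -- bound on the derivative
  have hJnorm : ∀ x : EuclideanSpace ℝ (Fin d), ‖J x‖ ≤ |η| := by
    intro x
    apply ContinuousLinearMap.opNorm_le_bound _ (abs_nonneg η)
    intro v
    rw [EuclideanSpace.norm_eq, EuclideanSpace.norm_eq]
    have habs : |η| * Real.sqrt (∑ i, ‖v i‖ ^ 2)
        = Real.sqrt (η ^ 2 * ∑ i, ‖v i‖ ^ 2) := by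
      rw [Real.sqrt_mul (sq_nonneg η), Real.sqrt_sq_eq_abs]
    rw [habs]
    apply Real.sqrt_le_sqrt
    have key := sm_key d (p x) v (hpnn x) (hpsum x)
    calc ∑ i, ‖J x v i‖ ^ 2
        = ∑ i, η ^ 2 * (p x i * (v i - ∑ j, p x j * v j)) ^ 2 := by
          refine Finset.sum_congr rfl fun i _ => ?_
          rw [hJapply, Real.norm_eq_abs, sq_abs]
          ring
      _ = η ^ 2 * ∑ i, (p x i * (v i - ∑ j, p x j * v j)) ^ 2 := by
          rw [Finset.mul_sum]
      _ ≤ η ^ 2 * ∑ i, (v i) ^ 2 :=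
          mul_le_mul_of_nonneg_left key (sq_nonneg η)
      _ = η ^ 2 * ∑ i, ‖v i‖ ^ 2 := by
          simp [Real.norm_eq_abs, sq_abs]
  -- conclude by the mean value inequality
  intro x y
  have := (convex_univ : Convex ℝ (Set.univ : Set (EuclideanSpace ℝ (Fin d)))).norm_image_sub_le_of_norm_hasFDerivWithin_le
    (f := f) (f' := J) (fun z _ => (hJ z).hasFDerivWithinAt)
    (fun z _ => hJnorm z) (Set.mem_univ y) (Set.mem_univ x)
  exact this
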